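/- On a pseudo-Hermitian vector space (V,⟨·,·⟩,J) of dimension m, for any linear functional φ the tensor σ(φ)(x,y;z) := φ(Jx)⟨y,z⟩ − φ(Jy)⟨x,z⟩ + φ(x)⟨Jy,z⟩ − φ(y)⟨Jx,z⟩ lies in 𝔥₋, and its contraction satisfies τ₁(σ(φ)) = (m−2)·(φ∘J), where τ₁(H)(x) := Σ ε^{ij} H(x,e_i;e_j) for an orthonormal-type basis {e_i} with ε_{ij} = ⟨e_i,e_j⟩. -/

import Mathlib

/-- `σ(φ)(x,y;z) := φ(Jx)⟨y,z⟩ − φ(Jy)⟨x,z⟩ + φ(x)⟨Jy,z⟩ − φ(y)⟨Jx,z⟩`. -/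
noncomputable def sigmaT {V : Type*} [AddCommGroup V] [Module ℝ V]
    (B : V →ₗ[ℝ] V →ₗ[ℝ] ℝ) (J : V →ₗ[ℝ] V) (φ : V →ₗ[ℝ] ℝ) (x y z : V) : ℝ :=
  φ (J x) * B y z - φ (J y) * B x z + φ x * B (J y) z - φ y * B (J x) z

/-- On a pseudo-Hermitian vector space of dimension `m`, `σ(φ) ∈ 𝔥₋` and
`τ₁(σ(φ)) = (m-2)·(φ ∘ J)`, where `τ₁(H)(x) = Σ ε^{ij} H(x,e_i;e_j)` for a basis
`{e_i}` with Gram matrix `ε_{ij} = ⟨e_i,e_j⟩` and inverse matrix `ε^{ij}`. -/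
theorem stmt_10 {V : Type*} [AddCommGroup V] [Module ℝ V] {m : ℕ}
    (B : V →ₗ[ℝ] V →ₗ[ℝ] ℝ) (J : V →ₗ[ℝ] V)
    (hBsymm : ∀ x y, B x y = B y x)
    (hBnd : ∀ x, (∀ y, B x y = 0) → x = 0)
    (hJ2 : ∀ x, J (J x) = -x)
    (hJB : ∀ x y, B (J x) (J y) = B x y)
    (φ : V →ₗ[ℝ] ℝ)
    (b : Module.Basis (Fin m) ℝ V)
    (Einv : Matrix (Fin m) (Fin m) ℝ)
    (hE1 : Einv * (Matrix.of fun i j => B (b i) (b j)) = 1)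
    (hE2 : (Matrix.of fun i j => B (b i) (b j)) * Einv = 1) :
    ((∀ x y z, sigmaT B J φ x y z = - sigmaT B J φ y x z) ∧
     (∀ x y z, sigmaT B J φ (J x) (J y) z = - sigmaT B J φ x y z)) ∧
    (∀ x, ∑ i, ∑ j, Einv i j * sigmaT B J φ x (b i) (b j) = ((m : ℝ) - 2) * φ (J x)) := by
  set E : Matrix (Fin m) (Fin m) ℝ := Matrix.of fun i j => B (b i) (b j) with hEdef
  -- Einv is symmetric
  have hEsymm : ∀ i j, E i j = E j i := fun i j => hBsymm (b i) (b j)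
  have hET : E.transpose = E := by
    ext i j; simp [Matrix.transpose_apply, hEsymm i j]
  have hE1' : Einv.transpose * E = 1 := by
    have := congrArg Matrix.transpose hE2
    rwa [Matrix.transpose_mul, hET, Matrix.transpose_one] at this
  have hInvSymm : ∀ i j, Einv i j = Einv j i := by
    have : Einv.transpose = Einv := by
      calc Einv.transpose = Einv.transpose * (E * Einv) := by rw [hE2, Matrix.mul_one]
        _ = (Einv.transpose * E) * Einv := by rw [Matrix.mul_assoc]
        _ = Einv := by rw [hE1', Matrix.one_mul]
    intro i j
    conv_rhs => rw [← this]
    rfl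
  have hEntry : ∀ i k, ∑ j, Einv i j * E j k = (1 : Matrix (Fin m) (Fin m) ℝ) i k := by
    intro i k
    rw [← Matrix.mul_apply, hE1]
  -- key reconstruction lemma
  have key : ∀ (w : V) (i : Fin m), ∑ j, Einv i j * B w (b j) = b.repr w i := by
    intro w i
    have hw : ∀ j, B w (b j) = ∑ k, b.repr w k * E k j := by
      intro j
      conv_lhs => rw [← Module.Basis.sum_repr b w]
      simp [hEdef, -Module.Basis.sum_repr]
    calc ∑ j, Einv i j * B w (b j)
        = ∑ j, ∑ k, b.repr w k * (Einv i j * E k j) := by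
          simp only [hw, Finset.mul_sum]
          refine Finset.sum_congr rfl fun j _ => Finset.sum_congr rfl fun k _ => by ring
      _ = ∑ k, b.repr w k * ∑ j, Einv i j * E j k := by
          rw [Finset.sum_comm]
          refine Finset.sum_congr rfl fun k _ => ?_
          rw [Finset.mul_sum]
          exact Finset.sum_congr rfl fun j _ => by rw [hEsymm k j]
      _ = ∑ k, b.repr w k * (1 : Matrix (Fin m) (Fin m) ℝ) i k := by
          simp only [hEntry]
      _ = b.repr w i := by
          simp [Matrix.one_apply, Finset.mul_sum]
  -- evaluation of a linear functional via repr
  have eval : ∀ (ψ : V →ₗ[ℝ] ℝ) (w : V), ∑ i, b.repr w i * ψ (b i) = ψ w := by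
    intro ψ w
    conv_rhs => rw [← Module.Basis.sum_repr b w]
    simp [map_sum, -Module.Basis.sum_repr]
  refine ⟨⟨fun x y z => by simp only [sigmaT]; ring, fun x y z => ?_⟩, fun x => ?_⟩
  · simp only [sigmaT, hJ2, map_neg, LinearMap.neg_apply]
    ring
  · -- trace computation
    have hT1 : ∑ i, ∑ j, Einv i j * B (b i) (b j) = (m : ℝ) := by
      have : ∀ i, ∑ j, Einv i j * B (b i) (b j) = (1 : Matrix (Fin m) (Fin m) ℝ) i i := by
        intro i
        rw [← hEntry i i]
        exact Finset.sum_congr rfl fun j _ => by rw [hEsymm j i]; rfl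
      simp only [this, Matrix.one_apply_eq]
      simp
    have hT2 : ∑ i, ∑ j, Einv i j * (φ (J (b i)) * B x (b j)) = φ (J x) := by
      calc ∑ i, ∑ j, Einv i j * (φ (J (b i)) * B x (b j))
          = ∑ i, φ (J (b i)) * ∑ j, Einv i j * B x (b j) := by
            refine Finset.sum_congr rfl fun i _ => ?_
            rw [Finset.mul_sum]
            exact Finset.sum_congr rfl fun j _ => by ring
        _ = ∑ i, b.repr x i * (φ.comp J) (b i) := by
            simp only [key]
            exact Finset.sum_congr rfl fun i _ => by simp [mul_comm]
        _ = φ (J x) := by rw [eval (φ.comp J) x]; rfl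
    have hT4 : ∑ i, ∑ j, Einv i j * (φ (b i) * B (J x) (b j)) = φ (J x) := by
      calc ∑ i, ∑ j, Einv i j * (φ (b i) * B (J x) (b j))
          = ∑ i, φ (b i) * ∑ j, Einv i j * B (J x) (b j) := by
            refine Finset.sum_congr rfl fun i _ => ?_
            rw [Finset.mul_sum]
            exact Finset.sum_congr rfl fun j _ => by ring
        _ = ∑ i, b.repr (J x) i * φ (b i) := by
            simp only [key]
            exact Finset.sum_congr rfl fun i _ => by ring
        _ = φ (J x) := eval φ (J x)
    have hAskew : ∀ u v : V, B (J u) v = - B (J v) u := by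
      intro u v
      have h1 : B (J u) v = B (J (J u)) (J v) := (hJB (J u) v).symm
      rw [h1, hJ2, map_neg, LinearMap.neg_apply, hBsymm]
    have hT3 : ∑ i, ∑ j, Einv i j * B (J (b i)) (b j) = 0 := by
      have hswap : ∑ i, ∑ j, Einv i j * B (J (b i)) (b j)
          = ∑ i, ∑ j, Einv j i * B (J (b j)) (b i) := Finset.sum_comm
      have hneg : ∑ i, ∑ j, Einv j i * B (J (b j)) (b i)
          = - ∑ i, ∑ j, Einv i j * B (J (b i)) (b j) := by
        rw [← Finset.sum_neg_distrib]
        refine Finset.sum_congr rfl fun i _ => ?_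
        rw [← Finset.sum_neg_distrib]
        refine Finset.sum_congr rfl fun j _ => ?_
        rw [hInvSymm j i, hAskew (b j) (b i)]
        ring
      have := hswap.trans hneg
      linarith
    calc ∑ i, ∑ j, Einv i j * sigmaT B J φ x (b i) (b j)
        = ∑ i, ∑ j, (φ (J x) * (Einv i j * B (b i) (b j))
            - Einv i j * (φ (J (b i)) * B x (b j))
            + φ x * (Einv i j * B (J (b i)) (b j))
            - Einv i j * (φ (b i) * B (J x) (b j))) := by
          refine Finset.sum_congr rfl fun i _ => Finset.sum_congr rfl fun j _ => ?_
          simp only [sigmaT]; ring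
      _ = ((m : ℝ) - 2) * φ (J x) := by
          simp only [Finset.sum_sub_distrib, Finset.sum_add_distrib, ← Finset.mul_sum]
          rw [hT1, hT2, hT3, hT4]
          ring
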